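/- Let L be a countable first-order language, let F be a Fraïssé class of L-structures and let U be its Fraïssé limit. Then the following are equivalent: (1) the monoid of self-embeddings of U has the amalgamation property, i.e., for all embeddings f, g : U → U there exist embeddings f', g' : U → U with f' ∘ f = g' ∘ g; (2) U is an amalgamation base in the class of countable structures with age contained in F, i.e., for all countable L-structures X, Y whose ages are contained in F and all embeddings f : U → X, g : U → Y, there exist a countable L-structure Z with age contained in F and embeddings f' : X → Z, g' : Y → Z with f' ∘ f = g' ∘ g. -/
import Mathlib


open FirstOrder Language Cardinal CategoryTheory

open FirstOrder.Language.Substructure in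
/-- Any countable structure whose age is contained in `K` embeds into the Fraïssé limit of `K`. -/
lemma aux_exists_embedding_of_age_subset (L : FirstOrder.Language.{0, 0}) [Countable L.Symbols]
    (K : Set (Bundled.{0} L.Structure))
    (U : Type) [L.Structure U] [Countable U] (hU : IsFraisseLimit K U)
    (X : Type) [L.Structure X] [Countable X] (hX : L.age X ⊆ K) :
    Nonempty (X ↪[L] U) := by
  have hext : L.IsExtensionPair X U := by
    intro ⟨f, f_FG⟩ m
    let S := f.dom ⊔ Substructure.closure L {m}
    have S_FG : S.FG := f_FG.sup (Substructure.fg_closure_singleton _)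
    have S_in_age_U : (⟨S, inferInstance⟩ : Bundled L.Structure) ∈ L.age U := by
      rw [hU.age]
      exact hX ⟨(Substructure.fg_iff_structure_fg S).1 S_FG, ⟨Substructure.subtype _⟩⟩
    haveI : Nonempty (S ↪[L] U) := S_in_age_U.2
    let ⟨g, g_eq⟩ := hU.ultrahomogeneous.extend_embedding (f.dom.fg_iff_structure_fg.1 f_FG)
      ((Substructure.subtype f.cod).comp f.toEquiv.toEmbedding)
      (Substructure.inclusion (le_sup_left : _ ≤ S))
    refine ⟨⟨⟨S, g.toHom.range, g.equivRange⟩, S_FG⟩,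
      Substructure.subset_closure.trans (le_sup_right : _ ≤ S) (Set.mem_singleton m),
      ⟨le_sup_left, ?_⟩⟩
    ext
    simp [Subtype.mk_le_mk, PartialEquiv.le_def, g_eq]
  have bot_in_age_U : (⟨(⊥ : L.Substructure X), inferInstance⟩ : Bundled L.Structure)
      ∈ L.age U := by
    rw [hU.age]
    exact hX ⟨(Substructure.fg_iff_structure_fg _).1 Substructure.fg_bot,
      ⟨Substructure.subtype _⟩⟩
  obtain ⟨_, ⟨e⟩⟩ := bot_in_age_U
  obtain ⟨f, -⟩ := embedding_from_cg Structure.cg_of_countable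
    ⟨⟨⊥, e.toHom.range, e.equivRange⟩, Substructure.fg_bot⟩ hext
  exact ⟨f⟩

/-- Let `K` be a Fraïssé class in a countable language with Fraïssé limit `U`.
The monoid of self-embeddings of `U` has the amalgamation property if and only if `U` is an
amalgamation base in the class of countable structures with age contained in `K`. -/
theorem statement9 (L : FirstOrder.Language.{0, 0}) [Countable L.Symbols]
    (K : Set (Bundled.{0} L.Structure)) [IsFraisse K]
    (U : Type) [L.Structure U] [Countable U]
    (hU : IsFraisseLimit K U) :
    (∀ f g : U ↪[L] U, ∃ f' g' : U ↪[L] U, f'.comp f = g'.comp g) ↔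
      (∀ (X Y : Bundled.{0} L.Structure), Countable X → Countable Y →
        L.age X ⊆ K → L.age Y ⊆ K →
        ∀ (f : U ↪[L] X) (g : U ↪[L] Y),
          ∃ Z : Bundled.{0} L.Structure, Countable Z ∧ L.age Z ⊆ K ∧
            ∃ (f' : X ↪[L] Z) (g' : Y ↪[L] Z), f'.comp f = g'.comp g) := by
  constructor
  · intro h X Y hXc hYc hXK hYK f g
    obtain ⟨iX⟩ := aux_exists_embedding_of_age_subset L K U hU X hXK
    obtain ⟨iY⟩ := aux_exists_embedding_of_age_subset L K U hU Y hYK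
    obtain ⟨F, G, hFG⟩ := h (iX.comp f) (iY.comp g)
    refine ⟨⟨U, inferInstance⟩, ‹_›, hU.age.le, F.comp iX, G.comp iY, ?_⟩
    ext x
    have := congrFun (congrArg DFunLike.coe hFG) x
    simpa using this
  · intro h f g
    obtain ⟨Z, hZc, hZK, f', g', hfg⟩ :=
      h ⟨U, inferInstance⟩ ⟨U, inferInstance⟩ ‹_› ‹_› hU.age.le hU.age.le f g
    obtain ⟨j⟩ := aux_exists_embedding_of_age_subset L K U hU Z hZK
    refine ⟨j.comp f', j.comp g', ?_⟩
    ext x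
    have := congrFun (congrArg DFunLike.coe hfg) x
    simpa using this
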